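/- Let λ be a rectifiable curve in a metric space Y whose endpoints are L apart, and suppose λ is ε-efficient at scale ε^{1/4}/2 (i.e., Σ_j d(p_j, p_{j+1}) ≤ (1+ε)L for the subdivision {p_j} at spacing (ε^{1/4}/2)·L). Let {q_i} be any subdivision of λ with r_s ≤ d_Y(q_i, q_{i+1}) ≤ r_b for all i, where r_s, r_b ∈ [ε^{1/4}L, L]. Then the proportion of subsegments λ_{[q_i,q_{i+1}]} that fail to be ε^{1/2}-efficient at scale ε^{1/4}/2 is at most ε^{1/2}·(r_b/r_s). -/

import Mathlib

open scoped Classical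

/-- Most subsegments of an efficient curve are efficient: if the fine subdivision
of a curve with endpoints `L` apart is `ε`-efficient (`Σ ≤ (1+ε)L`), and `{q_i}` is
a coarse subdivision with gaps in `[r_s, r_b] ⊆ [ε^{1/4}L, L]`, then at most an
`ε^{1/2}·(r_b/r_s)` proportion of coarse subsegments fail to be `ε^{1/2}`-efficient. -/
theorem stmt_14 {Y : Type*} [MetricSpace Y] (ε L rs rb : ℝ) (N : ℕ)
    (hε : 0 < ε) (hε1 : ε < 1) (hL : 0 < L) (hN : 0 < N)
    (hrs : rs ∈ Set.Icc (ε ^ ((1 : ℝ) / 4) * L) L)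
    (hrb : rb ∈ Set.Icc (ε ^ ((1 : ℝ) / 4) * L) L)
    (hrsb : rs ≤ rb) (hsmall : Real.sqrt ε * (rb / rs) < 1)
    (q : ℕ → Y) (hqL : dist (q 0) (q N) = L)
    (hspace : ∀ i < N, rs ≤ dist (q i) (q (i + 1)) ∧ dist (q i) (q (i + 1)) ≤ rb)
    (m : ℕ → ℕ) (c : ℕ → ℕ → Y)
    (hc0 : ∀ i < N, c i 0 = q i) (hclast : ∀ i < N, c i (m i) = q (i + 1))
    (heff : ∑ i ∈ Finset.range N, ∑ j ∈ Finset.range (m i), dist (c i j) (c i (j + 1))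
        ≤ (1 + ε) * L) :
    (((Finset.range N).filter fun i =>
        (1 + Real.sqrt ε) * dist (q i) (q (i + 1)) <
          ∑ j ∈ Finset.range (m i), dist (c i j) (c i (j + 1))).card : ℝ)
      ≤ Real.sqrt ε * (rb / rs) * N := by

  have hrs0 : 0 < rs := lt_of_lt_of_le (by positivity) hrs.1
  have hse : 0 < Real.sqrt ε := Real.sqrt_pos.mpr hε
  have hsq : Real.sqrt ε * Real.sqrt ε = ε := Real.mul_self_sqrt hε.le
  set B := (Finset.range N).filter fun i =>
      (1 + Real.sqrt ε) * dist (q i) (q (i + 1)) <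
        ∑ j ∈ Finset.range (m i), dist (c i j) (c i (j + 1)) with hBdef
  have key : ∀ i ∈ Finset.range N,
      dist (q i) (q (i + 1)) + (if i ∈ B then Real.sqrt ε * rs else 0)
        ≤ ∑ j ∈ Finset.range (m i), dist (c i j) (c i (j + 1)) := by
    intro i hi
    have hiN := Finset.mem_range.mp hi
    have hd : dist (q i) (q (i + 1))
        ≤ ∑ j ∈ Finset.range (m i), dist (c i j) (c i (j + 1)) := by
      have h := dist_le_range_sum_dist (fun j => c i j) (m i)
      simpa [hc0 i hiN, hclast i hiN] using h
    by_cases hib : i ∈ B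
    · simp only [hib, if_true]
      have hlt : (1 + Real.sqrt ε) * dist (q i) (q (i + 1)) <
          ∑ j ∈ Finset.range (m i), dist (c i j) (c i (j + 1)) :=
        (Finset.mem_filter.mp hib).2
      have hrsd : rs ≤ dist (q i) (q (i + 1)) := (hspace i hiN).1
      nlinarith [hse.le]
    · simpa [hib] using hd
  have hsum := Finset.sum_le_sum key
  have hsplit : ∑ i ∈ Finset.range N,
      (dist (q i) (q (i + 1)) + (if i ∈ B then Real.sqrt ε * rs else 0))
      = (∑ i ∈ Finset.range N, dist (q i) (q (i + 1)))
        + (B.card : ℝ) * (Real.sqrt ε * rs) := by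
    rw [Finset.sum_add_distrib]
    congr 1
    rw [Finset.sum_ite_mem, Finset.inter_eq_right.mpr (Finset.filter_subset _ _),
      Finset.sum_const, nsmul_eq_mul]
  have hLd : L ≤ ∑ i ∈ Finset.range N, dist (q i) (q (i + 1)) := by
    have h := dist_le_range_sum_dist q N
    rwa [hqL] at h
  have hdNrb : ∑ i ∈ Finset.range N, dist (q i) (q (i + 1)) ≤ (N : ℝ) * rb := by
    calc ∑ i ∈ Finset.range N, dist (q i) (q (i + 1))
        ≤ ∑ _i ∈ Finset.range N, rb :=
          Finset.sum_le_sum fun i hi => (hspace i (Finset.mem_range.mp hi)).2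
      _ = (N : ℝ) * rb := by simp [mul_comm]
  have h1 : (B.card : ℝ) * (Real.sqrt ε * rs) ≤ ε * L := by
    rw [hsplit] at hsum
    nlinarith [le_trans hsum heff]
  have hLN : L ≤ (N : ℝ) * rb := le_trans hLd hdNrb
  rw [show Real.sqrt ε * (rb / rs) * (N : ℝ) = Real.sqrt ε * rb * N / rs from by ring,
    le_div_iff₀ hrs0]
  have hcancel : Real.sqrt ε * ((B.card : ℝ) * rs)
      ≤ Real.sqrt ε * (Real.sqrt ε * rb * N) := by
    nlinarith [mul_le_mul_of_nonneg_left hLN hε.le]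
  exact le_of_mul_le_mul_left hcancel hse
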